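/- Let α ∈ (0,1) be irrational with best approximation denominators q_n. Define M(θ, k) = max_{1≤ℓ≤k} ω(θ, ℓ) where ω(θ, ℓ) = Σ_{i=1}^ℓ z_i(θ) and z_i(θ) = ±1 according to whether {θ + iα} ∈ [0,1/2) or [1/2,1). Then for every θ and every k with q_n < k ≤ q_{n+1}, M(θ, k) ≤ q_1 + 3⌈k/q_n⌉ + 3 Σ_{j=2}^n ⌈q_j/q_{j-1}⌉. -/

import Mathlib

/-- The ±1 coding of the rotation orbit: `1` if `{θ + iα} ∈ [0,1/2)`, `-1` otherwise. -/
noncomputable def zCode (α θ : ℝ) (i : ℕ) : ℤ :=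
  if Int.fract (θ + i * α) < 1 / 2 then 1 else -1

/-- The deterministic walk `ω(θ, m) = Σ_{i=1}^m z_i(θ)`. -/
noncomputable def walk (α θ : ℝ) (m : ℕ) : ℤ :=
  ∑ i ∈ Finset.Icc 1 m, zCode α θ i
/-- `M(θ, k) = max_{1 ≤ ℓ ≤ k} ω(θ, ℓ)`. -/
noncomputable def maxWalk (α θ : ℝ) (k : ℕ) : ℤ :=
  sSup {m : ℤ | ∃ ℓ, 1 ≤ ℓ ∧ ℓ ≤ k ∧ walk α θ ℓ = m}

/-- `m(θ, k) = min_{1 ≤ ℓ ≤ k} ω(θ, ℓ)`. -/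
noncomputable def minWalk (α θ : ℝ) (k : ℕ) : ℤ :=
  sInf {m : ℤ | ∃ ℓ, 1 ≤ ℓ ∧ ℓ ≤ k ∧ walk α θ ℓ = m}

lemma walk_zero (α θ : ℝ) : walk α θ 0 = 0 := by simp [walk]

lemma walk_succ (α θ : ℝ) (m : ℕ) :
    walk α θ (m + 1) = walk α θ m + zCode α θ (m + 1) :=
  Finset.sum_Icc_succ_top (Nat.succ_le_succ (Nat.zero_le m)) _

lemma walk_le (α θ : ℝ) (m : ℕ) : walk α θ m ≤ m := by
  induction m with
  | zero => simp [walk_zero]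
  | succ m ih =>
    rw [walk_succ]
    have : zCode α θ (m + 1) ≤ 1 := by unfold zCode; split <;> omega
    push_cast
    omega

lemma zCode_shift (α θ : ℝ) (s i : ℕ) :
    zCode α θ (s + i) = zCode α (θ + s * α) i := by
  unfold zCode
  have h : θ + ((s + i : ℕ) : ℝ) * α = (θ + s * α) + i * α := by push_cast; ring
  rw [h]

lemma walk_add (α θ : ℝ) (s m : ℕ) :
    walk α θ (s + m) = walk α θ s + walk α (θ + s * α) m := by
  induction m with
  | zero => simp [walk_zero]
  | succ m ih =>
    have : s + (m + 1) = (s + m) + 1 := by ring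
    rw [this, walk_succ, ih, walk_succ, ← zCode_shift]
    ring_nf

lemma walk_eq_card (α θ : ℝ) (m : ℕ) :
    walk α θ m = 2 * ((Finset.Icc 1 m).filter
      (fun i : ℕ => Int.fract (θ + (i : ℝ) * α) < 1 / 2)).card - m := by
  unfold walk zCode
  calc (∑ i ∈ Finset.Icc 1 m, if Int.fract (θ + (i:ℝ) * α) < 1/2 then (1:ℤ) else -1)
      = ∑ i ∈ Finset.Icc 1 m,
        (2 * (if Int.fract (θ + (i:ℝ) * α) < 1/2 then (1:ℤ) else 0) - 1) :=
        Finset.sum_congr rfl (fun i _ => by split <;> ring)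
    _ = 2 * ((Finset.Icc 1 m).filter
          (fun i : ℕ => Int.fract (θ + (i : ℝ) * α) < 1 / 2)).card - m := by
        rw [Finset.sum_sub_distrib, ← Finset.mul_sum, Finset.sum_boole, Finset.sum_const]
        simp [Nat.card_Icc]

lemma grid_eq (θ Q : ℝ) (hQne : Q ≠ 0) (qn : ℕ) (hq : Q = (qn:ℝ)) (p : ℤ) (i : ℕ) :
    Int.fract (θ + (i:ℝ) * p / Q) =
      (Int.fract (Q * θ)
        + (((i:ℤ) * p - (qn:ℤ) * ⌊θ + (i:ℝ) * p / Q⌋ + ⌊Q * θ⌋ : ℤ) : ℝ)) / Q := by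
  rw [Int.fract, Int.fract]
  generalize ⌊θ + (i:ℝ) * p / Q⌋ = A
  generalize ⌊Q * θ⌋ = B
  push_cast
  rw [← hq]
  field_simp
  ring

lemma block_bound (α θ : ℝ) (qn : ℕ) (p : ℤ) (hq2 : 2 ≤ qn)
    (hcop : IsCoprime p (qn : ℤ))
    (happ : |(qn : ℝ) * α - p| < 1 / qn) :
    walk α θ qn ≤ 3 := by
  have hQpos : (0:ℝ) < (qn:ℝ) := by positivity
  have hQne : (qn:ℝ) ≠ 0 := ne_of_gt hQpos
  set Q : ℝ := (qn : ℝ) with hQ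
  set s : ℝ := Int.fract (Q * θ) with hs
  have hs0 : 0 ≤ s := Int.fract_nonneg _
  have hs1 : s < 1 := Int.fract_lt_one _
  set m : ℕ → ℤ := fun i => (i : ℤ) * p - (qn : ℤ) * ⌊θ + (i:ℝ) * p / Q⌋ + ⌊Q * θ⌋ with hm
  have key1 : ∀ i : ℕ, Int.fract (θ + (i:ℝ) * p / Q) = (s + m i) / Q := by
    intro i
    simp only [hs, hm]
    exact grid_eq θ Q hQne qn hQ p i
  have hm0 : ∀ i : ℕ, 0 ≤ m i ∧ m i ≤ (qn : ℤ) - 1 := by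
    intro i
    have h1 : 0 ≤ (s + (m i : ℝ)) / Q := (key1 i) ▸ Int.fract_nonneg _
    have h2 : (s + (m i : ℝ)) / Q < 1 := (key1 i) ▸ Int.fract_lt_one _
    rw [le_div_iff₀ hQpos] at h1
    rw [div_lt_one hQpos] at h2
    have hl : (-1 : ℝ) < (m i : ℝ) := by linarith
    have hr : (m i : ℝ) < (qn : ℝ) := by linarith
    have hl' : (-1 : ℤ) < m i := by exact_mod_cast hl
    have hr' : m i < (qn : ℤ) := by exact_mod_cast hr
    omega
  have hinj : ∀ i ∈ Finset.Icc 1 qn, ∀ j ∈ Finset.Icc 1 qn, m i = m j → i = j := by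
    intro i hi j hj hij
    simp only [Finset.mem_Icc] at hi hj
    rw [hm] at hij
    have hdvd : (qn : ℤ) ∣ ((i : ℤ) - j) * p := by
      refine ⟨⌊θ + (i:ℝ) * p / Q⌋ - ⌊θ + (j:ℝ) * p / Q⌋, ?_⟩
      simp only at hij
      ring_nf at hij ⊢
      linarith [hij]
    have hdvd2 : (qn : ℤ) ∣ ((i : ℤ) - j) := (hcop.symm).dvd_of_dvd_mul_right hdvd
    have := Int.eq_zero_of_abs_lt_dvd hdvd2 (by rw [abs_sub_lt_iff]; omega)
    omega
  -- perturbation identity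
  have hpert : ∀ i : ℕ, Int.fract (θ + (i:ℝ) * α)
      = Int.fract ((s + m i) / Q + (i:ℝ) * (α - p / Q)) := by
    intro i
    have h1 : θ + (i:ℝ) * α = (θ + (i:ℝ) * p / Q) + (i:ℝ) * (α - p / Q) := by
      field_simp
      ring
    rw [h1]
    have h2 : (θ + (i:ℝ) * p / Q) + (i:ℝ) * (α - p / Q)
        = (Int.fract (θ + (i:ℝ) * p / Q) + (i:ℝ) * (α - p / Q))
          + (⌊θ + (i:ℝ) * p / Q⌋ : ℤ) := by
      rw [Int.fract]; push_cast; ring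
    rw [h2, Int.fract_add_intCast, key1 i]
  -- perturbation size
  have hδ : ∀ i ∈ Finset.Icc 1 qn, |(i:ℝ) * (α - p / Q)| < 1 / Q := by
    intro i hi
    simp only [Finset.mem_Icc] at hi
    have hiQ : (i:ℝ) ≤ Q := by rw [hQ]; exact_mod_cast hi.2
    have h1 : |Q * α - p| = |α - p / Q| * Q := by
      rw [show Q * α - (p:ℝ) = (α - p / Q) * Q by field_simp, abs_mul, abs_of_pos hQpos]
    have h2 : |(i:ℝ) * (α - p / Q)| ≤ Q * |α - p / Q| := by
      rw [abs_mul, abs_of_nonneg (by positivity : (0:ℝ) ≤ (i:ℝ))]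
      exact mul_le_mul_of_nonneg_right hiQ (abs_nonneg _)
    calc |(i:ℝ) * (α - p / Q)| ≤ Q * |α - p / Q| := h2
      _ = |Q * α - p| := by rw [h1, mul_comm]
      _ < 1 / Q := happ
  set N := (Finset.Icc 1 qn).filter
    (fun i : ℕ => Int.fract (θ + (i : ℝ) * α) < 1 / 2) with hN
  have hinjN : Set.InjOn m ↑N := by
    intro i hi j hj hij
    exact hinj i (Finset.filter_subset _ _ (Finset.mem_coe.mp hi))
      j (Finset.filter_subset _ _ (Finset.mem_coe.mp hj)) hij
  set c : ℤ := ((qn:ℤ) + 1) / 2 with hc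
  have hcard : (N.card : ℤ) ≤ c + 1 := by
    rcases le_or_gt 0 (α - p / Q) with hε | hε
    · -- positive perturbation
      have hmaps : ∀ i ∈ N, m i ∈ insert ((qn:ℤ) - 1) (Finset.Icc 0 (c - 1)) := by
        intro i hiN
        have hi : i ∈ Finset.Icc 1 qn := Finset.filter_subset _ _ hiN
        have hfr : Int.fract (θ + (i:ℝ) * α) < 1 / 2 := (Finset.mem_filter.mp hiN).2
        rw [hpert i] at hfr
        have hδ0 : 0 ≤ (i:ℝ) * (α - p / Q) := by positivity
        have hδ1 : (i:ℝ) * (α - p / Q) < 1 / Q := lt_of_abs_lt (hδ i hi)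
        have hy0 : 0 ≤ (s + (m i : ℝ)) / Q := (key1 i) ▸ Int.fract_nonneg _
        have hy1 : (s + (m i : ℝ)) / Q < 1 := (key1 i) ▸ Int.fract_lt_one _
        by_cases hcase : (s + (m i : ℝ)) / Q + (i:ℝ) * (α - p / Q) < 1
        · rw [Int.fract_eq_self.mpr ⟨by linarith, hcase⟩] at hfr
          have hy2 : (s + (m i : ℝ)) / Q < 1 / 2 := by linarith
          rw [div_lt_div_iff₀ hQpos (by norm_num : (0:ℝ) < 2)] at hy2
          have h2 : (m i : ℝ) * 2 < (qn : ℝ) := by rw [hQ] at hy2; linarith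
          have h3 : m i * 2 < (qn : ℤ) := by exact_mod_cast h2
          exact Finset.mem_insert_of_mem (Finset.mem_Icc.mpr ⟨(hm0 i).1, by omega⟩)
        · push_neg at hcase
          have hy3 : 1 - 1 / Q < (s + (m i : ℝ)) / Q := by linarith
          have hy4 : (1 - 1 / Q) * Q < ((s + (m i : ℝ)) / Q) * Q :=
            mul_lt_mul_of_pos_right hy3 hQpos
          have hy5 : (1 - 1 / Q) * Q = Q - 1 := by field_simp
          have hy6 : ((s + (m i : ℝ)) / Q) * Q = s + (m i : ℝ) := by field_simp
          have h7 : (qn:ℝ) - 2 < (m i : ℝ) := by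
            rw [hy5, hy6] at hy4; rw [hQ] at hy4; linarith
          have h8 : (qn:ℤ) - 2 < m i := by exact_mod_cast h7
          exact Finset.mem_insert.mpr (Or.inl (by have := (hm0 i).2; omega))
      have h9 := Finset.card_le_card_of_injOn m hmaps hinjN
      have h10 : (insert ((qn:ℤ) - 1) (Finset.Icc 0 (c - 1))).card
          ≤ (Finset.Icc (0:ℤ) (c - 1)).card + 1 := Finset.card_insert_le _ _
      have h11 : (Finset.Icc (0:ℤ) (c - 1)).card = (c - 1 + 1 - 0).toNat := Int.card_Icc _ _
      have hc0 : 0 ≤ c := by omega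
      have := h9.trans h10
      omega
    · -- negative perturbation
      have hmaps : ∀ i ∈ N, m i ∈ Finset.Icc (0:ℤ) c := by
        intro i hiN
        have hi : i ∈ Finset.Icc 1 qn := Finset.filter_subset _ _ hiN
        have hfr : Int.fract (θ + (i:ℝ) * α) < 1 / 2 := (Finset.mem_filter.mp hiN).2
        rw [hpert i] at hfr
        have hi1 : (1:ℝ) ≤ (i:ℝ) := by
          simp only [Finset.mem_Icc] at hi; exact_mod_cast hi.1
        have hδ0 : (i:ℝ) * (α - p / Q) ≤ 0 :=
          mul_nonpos_of_nonneg_of_nonpos (by positivity) (le_of_lt hε)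
        have hδ1 : -(1 / Q) < (i:ℝ) * (α - p / Q) := neg_lt_of_abs_lt (hδ i hi)
        have hy0 : 0 ≤ (s + (m i : ℝ)) / Q := (key1 i) ▸ Int.fract_nonneg _
        have hy1 : (s + (m i : ℝ)) / Q < 1 := (key1 i) ▸ Int.fract_lt_one _
        have hQ2 : (2:ℝ) ≤ Q := by rw [hQ]; exact_mod_cast hq2
        have hQinv : 1 / Q ≤ 1 / 2 := by
          rw [div_le_div_iff₀ hQpos (by norm_num : (0:ℝ) < 2)]; linarith
        by_cases hcase : 0 ≤ (s + (m i : ℝ)) / Q + (i:ℝ) * (α - p / Q)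
        · rw [Int.fract_eq_self.mpr ⟨hcase, by linarith⟩] at hfr
          have hy2 : (s + (m i : ℝ)) / Q < 1 / 2 + 1 / Q := by linarith
          have hy4 : ((s + (m i : ℝ)) / Q) * Q < (1 / 2 + 1 / Q) * Q :=
            mul_lt_mul_of_pos_right hy2 hQpos
          have hy5 : (1 / 2 + 1 / Q) * Q = Q / 2 + 1 := by field_simp
          have hy6 : ((s + (m i : ℝ)) / Q) * Q = s + (m i : ℝ) := by field_simp
          have h2 : (m i : ℝ) * 2 < (qn : ℝ) + 2 := by
            rw [hy5, hy6] at hy4; rw [hQ] at hy4; linarith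
          have h3 : m i * 2 < (qn : ℤ) + 2 := by exact_mod_cast h2
          exact Finset.mem_Icc.mpr ⟨(hm0 i).1, by omega⟩
        · push_neg at hcase
          exfalso
          have hval : Int.fract ((s + (m i : ℝ)) / Q + (i:ℝ) * (α - p / Q))
              = (s + (m i : ℝ)) / Q + (i:ℝ) * (α - p / Q) + 1 := by
            rw [← Int.fract_add_one]
            exact Int.fract_eq_self.mpr ⟨by linarith, by linarith⟩
          rw [hval] at hfr
          linarith
      have h9 := Finset.card_le_card_of_injOn m hmaps hinjN
      have h11 : (Finset.Icc (0:ℤ) c).card = (c + 1 - 0).toNat := Int.card_Icc _ _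
      have hc0 : 0 ≤ c := by omega
      omega
  rw [walk_eq_card, ← hN]
  omega

section CFfacts
open GenContFract

-- irrational numbers have non-terminating continued fractions
lemma not_term (α : ℝ) (hα : Irrational α) (n : ℕ) : ¬(GenContFract.of α).TerminatedAt n := by
  intro h
  have hterm : (GenContFract.of α).Terminates := ⟨n, h⟩
  obtain ⟨r, hr⟩ := (terminates_iff_rat α).mp hterm
  exact hα ⟨r, hr.symm⟩

-- numerators are integers
lemma nums_int (α : ℝ) (hα : Irrational α) :
    ∀ n : ℕ, ∃ P : ℤ, ((GenContFract.of α).contsAux n).a = (P : ℝ)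
      ∧ ∃ P' : ℤ, ((GenContFract.of α).contsAux (n+1)).a = (P' : ℝ) := by
  intro n
  induction n with
  | zero =>
    refine ⟨1, ?_, ⌊α⌋, ?_⟩
    · rw [zeroth_contAux_eq_one_zero]; norm_num
    · rw [first_contAux_eq_h_one]; simp [of_h_eq_floor]
  | succ n ih =>
    obtain ⟨P, hP, P', hP'⟩ := ih
    obtain ⟨gp, hgp⟩ : ∃ gp, (GenContFract.of α).s.get? n = some gp :=
      Option.ne_none_iff_exists'.1 (not_term α hα n)
    have ha : gp.a = 1 := of_partNum_eq_one (partNum_eq_s_a hgp)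
    obtain ⟨z, hz⟩ : ∃ z : ℤ, gp.b = (z : ℝ) :=
      exists_int_eq_of_partDen (partDen_eq_s_b hgp)
    refine ⟨P', hP', z * P' + P, ?_⟩
    rw [contsAux_recurrence hgp rfl rfl]
    simp only [ha, hz, hP, hP']
    push_cast
    ring

lemma dens_ge_one (α : ℝ) (n : ℕ) : (1:ℝ) ≤ (GenContFract.of α).dens n := by
  induction n with
  | zero => rw [GenContFract.zeroth_den_eq_one]
  | succ n ih => exact le_trans ih (GenContFract.of_den_mono)

lemma cf_facts (α : ℝ) (hα : Irrational α) (q : ℕ → ℕ)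
    (hq : ∀ j, (q j : ℝ) = (GenContFract.of α).dens j) :
    (∀ n, 1 ≤ q n) ∧ (∀ n, q n ≤ q (n+1)) ∧
      (∀ n, ∃ p : ℤ, IsCoprime p (q n : ℤ) ∧ |(q n : ℝ) * α - p| < 1 / (q n)) := by
  have hq1 : ∀ n, 1 ≤ q n := by
    intro n
    have := dens_ge_one α n
    rw [← hq n] at this
    exact_mod_cast this
  have hq1' : ∀ n, (1:ℝ) ≤ (q n : ℝ) := fun n => by exact_mod_cast hq1 n
  have hqpos : ∀ n, (0:ℝ) < (q n : ℝ) := fun n => lt_of_lt_of_le one_pos (hq1' n)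
  have hmono : ∀ n, q n ≤ q (n+1) := by
    intro n
    have := GenContFract.of_den_mono (v := α) (n := n)
    rw [← hq n, ← hq (n+1)] at this
    exact_mod_cast this
  refine ⟨hq1, hmono, ?_⟩
  intro n
  -- integer numerators
  have hPn : ∃ P : ℤ, (GenContFract.of α).nums n = (P : ℝ) := by
    obtain ⟨_, _, P', h'⟩ := nums_int α hα n
    exact ⟨P', by rw [GenContFract.num_eq_conts_a, GenContFract.nth_cont_eq_succ_nth_contAux]; exact h'⟩
  have hPn1 : ∃ P : ℤ, (GenContFract.of α).nums (n+1) = (P : ℝ) := by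
    obtain ⟨_, _, P', h'⟩ := nums_int α hα (n+1)
    exact ⟨P', by rw [GenContFract.num_eq_conts_a, GenContFract.nth_cont_eq_succ_nth_contAux]; exact h'⟩
  obtain ⟨P, hP⟩ := hPn
  obtain ⟨P', hP'⟩ := hPn1
  -- determinant identity
  have hdet : (GenContFract.of α).nums n * (GenContFract.of α).dens (n+1)
      - (GenContFract.of α).dens n * (GenContFract.of α).nums (n+1) = (-1)^(n+1) := by
    have := SimpContFract.determinant
      (s := ⟨GenContFract.of α, GenContFract.of_isSimpContFract α⟩)
      (not_term α hα n)
    exact this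
  rw [hP, hP', ← hq n, ← hq (n+1)] at hdet
  have hdet' : P * (q (n+1) : ℤ) - (q n : ℤ) * P' = (-1)^(n+1) := by exact_mod_cast hdet
  have hcop : IsCoprime P (q n : ℤ) := by
    rcases Nat.even_or_odd (n+1) with he | ho
    · rw [he.neg_one_pow] at hdet'
      exact ⟨(q (n+1) : ℤ), -P', by linear_combination hdet'⟩
    · rw [ho.neg_one_pow] at hdet'
      exact ⟨-(q (n+1) : ℤ), P', by linear_combination -hdet'⟩
  refine ⟨P, hcop, ?_⟩
  -- approximation
  have habs := GenContFract.abs_sub_convs_le (not_term α hα n)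
  rw [GenContFract.conv_eq_num_div_den, hP, ← hq n, ← hq (n+1)] at habs
  have h1 : |(q n : ℝ) * α - P| = (q n : ℝ) * |α - P / (q n : ℝ)| := by
    have h0 : (q n : ℝ) ≠ 0 := ne_of_gt (hqpos n)
    rw [show (q n : ℝ) * α - (P:ℝ) = (q n : ℝ) * (α - P / (q n : ℝ)) by
      field_simp, abs_mul, abs_of_pos (hqpos n)]
  have h2 : |(q n : ℝ) * α - P| ≤ 1 / (q (n+1) : ℝ) := by
    rw [h1]
    calc (q n : ℝ) * |α - P / (q n : ℝ)|
        ≤ (q n : ℝ) * (1 / ((q n : ℝ) * (q (n+1) : ℝ))) :=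
          mul_le_mul_of_nonneg_left habs (le_of_lt (hqpos n))
      _ = 1 / (q (n+1) : ℝ) := by
          rw [mul_one_div, ← div_div, div_self (ne_of_gt (hqpos n))]
  have hne : |(q n : ℝ) * α - P| ≠ 1 / (q (n+1) : ℝ) := by
    intro h
    rcases (abs_eq (by positivity : (0:ℝ) ≤ 1 / (q (n+1) : ℝ))).mp h with h' | h'
    · refine absurd ?_ ((irrational_iff_ne_rational α).mp hα
        (P * (q (n+1) : ℤ) + 1) ((q n : ℤ) * (q (n+1) : ℤ))
          (mul_ne_zero (by have := hq1 n; omega) (by have := hq1 (n+1); omega)))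
      have hne1 : (q (n+1) : ℝ) ≠ 0 := ne_of_gt (hqpos (n+1))
      have hne0 : (q n : ℝ) ≠ 0 := ne_of_gt (hqpos n)
      have h'' : ((q n : ℝ) * α - P) * (q (n+1) : ℝ) = 1 := by
        rw [h']; field_simp
      push_cast
      rw [eq_div_iff (by positivity)]
      linear_combination h''
    · refine absurd ?_ ((irrational_iff_ne_rational α).mp hα
        (P * (q (n+1) : ℤ) - 1) ((q n : ℤ) * (q (n+1) : ℤ))
          (mul_ne_zero (by have := hq1 n; omega) (by have := hq1 (n+1); omega)))
      have hne1 : (q (n+1) : ℝ) ≠ 0 := ne_of_gt (hqpos (n+1))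
      have hne0 : (q n : ℝ) ≠ 0 := ne_of_gt (hqpos n)
      have h'' : ((q n : ℝ) * α - P) * (q (n+1) : ℝ) = -1 := by
        rw [h']; field_simp
      push_cast
      rw [eq_div_iff (by positivity)]
      linear_combination h''
  have h3 : |(q n : ℝ) * α - P| < 1 / (q (n+1) : ℝ) := lt_of_le_of_ne h2 hne
  have h4 : 1 / (q (n+1) : ℝ) ≤ 1 / (q n : ℝ) := by
    apply one_div_le_one_div_of_le (hqpos n)
    exact_mod_cast hmono n
  exact lt_of_lt_of_le h3 h4

end CFfacts

lemma key_induction (α : ℝ) (hα : Irrational α) (q : ℕ → ℕ)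
    (hq : ∀ j, (q j : ℝ) = (GenContFract.of α).dens j) :
    ∀ n : ℕ, ∀ θ : ℝ, ∀ ℓ : ℕ, 1 ≤ ℓ → ℓ ≤ q (n + 1) →
      walk α θ ℓ ≤ (q 1 : ℤ) + 3 * ⌈(ℓ : ℝ) / (q n : ℝ)⌉ +
        3 * ∑ j ∈ Finset.Icc 2 n, ⌈(q j : ℝ) / (q (j - 1) : ℝ)⌉ := by
  obtain ⟨hq1, hmono, happx⟩ := cf_facts α hα q hq
  have hqpos : ∀ n, (0:ℝ) < (q n : ℝ) := fun n => by exact_mod_cast hq1 n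
  -- single block bound
  have hblock : ∀ nn : ℕ, ∀ θ' : ℝ, walk α θ' (q nn) ≤ 3 := by
    intro nn θ'
    rcases le_or_gt 2 (q nn) with h2 | h2
    · obtain ⟨p, hcop, happ⟩ := happx nn
      exact block_bound α θ' (q nn) p h2 hcop happ
    · have : q nn = 1 := by have := hq1 nn; omega
      rw [this]
      have := walk_le α θ' 1
      omega
  -- multi-block bound
  have hblocks : ∀ nn : ℕ, ∀ b : ℕ, ∀ θ' : ℝ, walk α θ' (b * q nn) ≤ 3 * b := by
    intro nn b
    induction b with
    | zero => intro θ'; simp [walk_zero]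
    | succ b ih =>
      intro θ'
      have hsplit : (b + 1) * q nn = b * q nn + q nn := by ring
      rw [hsplit, walk_add]
      have h1 := ih θ'
      have h2 := hblock nn (θ' + (b * q nn : ℕ) * α)
      push_cast
      push_cast at h1 h2
      linarith
  -- ceiling facts
  have hceil1 : ∀ a b : ℕ, 1 ≤ a → 1 ≤ b → (1:ℤ) ≤ ⌈(a:ℝ)/(b:ℝ)⌉ := by
    intro a b ha hb
    apply Int.ceil_pos.mpr
    apply div_pos <;> [exact_mod_cast ha; exact_mod_cast hb]
  have hsum_nonneg : ∀ n : ℕ,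
      (0:ℤ) ≤ ∑ j ∈ Finset.Icc 2 n, ⌈(q j : ℝ) / (q (j - 1) : ℝ)⌉ := by
    intro n
    exact Finset.sum_nonneg fun j _ => Int.ceil_nonneg (by positivity)
  have hceil_mono : ∀ (a a' b : ℕ), a ≤ a' → ⌈(a:ℝ)/(b:ℝ)⌉ ≤ ⌈(a':ℝ)/(b:ℝ)⌉ := by
    intro a a' b h
    apply Int.ceil_le_ceil
    have h' : (a:ℝ) ≤ (a':ℝ) := by exact_mod_cast h
    gcongr
  intro n
  induction n with
  | zero =>
    intro θ ℓ h1 h2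
    have hw := walk_le α θ ℓ
    have hc : (0:ℤ) ≤ ⌈(ℓ:ℝ)/(q 0 : ℝ)⌉ := le_trans zero_le_one (hceil1 ℓ (q 0) h1 (hq1 0))
    have hsum : ∑ j ∈ Finset.Icc 2 0, ⌈(q j : ℝ) / (q (j - 1) : ℝ)⌉ = 0 := by
      rw [show Finset.Icc 2 0 = ∅ from Finset.Icc_eq_empty (by omega)]
      simp
    rw [hsum]
    have : (ℓ:ℤ) ≤ (q 1 : ℤ) := by exact_mod_cast h2
    omega
  | succ n IH =>
    intro θ ℓ h1 h2
    rcases le_or_gt ℓ (q (n+1)) with hle | hgt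
    · -- small case
      rcases Nat.eq_zero_or_pos n with hn0 | hn1
      · subst hn0
        simp only [Nat.zero_add] at hle h2 ⊢
        have hw := walk_le α θ ℓ
        have hc : (0:ℤ) ≤ ⌈(ℓ:ℝ)/(q 1 : ℝ)⌉ := le_trans zero_le_one (hceil1 ℓ (q 1) h1 (hq1 1))
        have hsum : ∑ j ∈ Finset.Icc 2 1, ⌈(q j : ℝ) / (q (j - 1) : ℝ)⌉ = 0 := by
          rw [show Finset.Icc 2 1 = ∅ from Finset.Icc_eq_empty (by omega)]
          simp
        rw [hsum]
        have hlq : (ℓ:ℤ) ≤ (q 1 : ℤ) := by exact_mod_cast hle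
        linarith
      · have hIH := IH θ ℓ h1 hle
        have hstep : ⌈(ℓ:ℝ)/(q n : ℝ)⌉ ≤ ⌈(q (n+1) : ℝ)/(q n : ℝ)⌉ := hceil_mono ℓ (q (n+1)) (q n) hle
        have hsum : ∑ j ∈ Finset.Icc 2 (n+1), ⌈(q j : ℝ) / (q (j - 1) : ℝ)⌉
            = (∑ j ∈ Finset.Icc 2 n, ⌈(q j : ℝ) / (q (j - 1) : ℝ)⌉)
              + ⌈(q (n+1) : ℝ) / (q n : ℝ)⌉ := by
          rw [Finset.sum_Icc_succ_top (by omega : 2 ≤ n + 1)]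
          norm_num
        have hc : (0:ℤ) ≤ ⌈(ℓ:ℝ)/(q (n+1) : ℝ)⌉ :=
          le_trans zero_le_one (hceil1 ℓ (q (n+1)) h1 (hq1 (n+1)))
        rw [hsum]
        linarith
    · -- big case : q (n+1) < ℓ ≤ q (n+2)
      have hQ1 : 1 ≤ q (n+1) := hq1 (n+1)
      have hQpos : 0 < q (n+1) := hQ1
      set b := ℓ / q (n+1) with hb
      set r := ℓ % q (n+1) with hr
      have hdecomp : q (n+1) * b + r = ℓ := Nat.div_add_mod ℓ (q (n+1))
      have hb1 : 1 ≤ b := (Nat.one_le_div_iff hQpos).mpr (le_of_lt hgt)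
      have hrlt : r < q (n+1) := Nat.mod_lt _ hQpos
      -- b ≤ ⌈ℓ / q (n+1)⌉
      have hbceil : (b : ℤ) ≤ ⌈(ℓ:ℝ)/(q (n+1) : ℝ)⌉ := by
        have hx : ((b:ℕ):ℝ) ≤ (ℓ:ℝ)/(q (n+1) : ℝ) := by
          rw [le_div_iff₀ (hqpos (n+1))]
          exact_mod_cast Nat.div_mul_le_self ℓ (q (n+1))
        have := le_trans hx (Int.le_ceil _)
        exact_mod_cast this
      -- split the walk
      have hwsplit : walk α θ ℓ = walk α θ (b * q (n+1))
          + walk α (θ + (b * q (n+1) : ℕ) * α) r := by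
        have hdecomp' : b * q (n+1) + r = ℓ := by rw [Nat.mul_comm]; exact hdecomp
        rw [← walk_add]
        congr 1
        exact hdecomp'.symm
      have hblk : walk α θ (b * q (n+1)) ≤ 3 * b := hblocks (n+1) b θ
      set θ' := θ + (b * q (n+1) : ℕ) * α with hθ'
      rcases Nat.eq_zero_or_pos r with hr0 | hr1
      · -- no remainder
        have hz : walk α θ' r = 0 := by rw [hr0, walk_zero]
        have hq1nn : (0:ℤ) ≤ (q 1 : ℤ) := by positivity
        have hs := hsum_nonneg (n+1)
        linarith [hwsplit, hblk, hbceil]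
      · -- remainder
        rcases Nat.eq_zero_or_pos n with hn0 | hn1
        · -- n = 0 : bound tail trivially by r ≤ q 1
          subst hn0
          have htail : walk α θ' r ≤ (r : ℤ) := walk_le α θ' r
          have hsum : ∑ j ∈ Finset.Icc 2 1, ⌈(q j : ℝ) / (q (j - 1) : ℝ)⌉ = 0 := by
            rw [show Finset.Icc 2 1 = ∅ from Finset.Icc_eq_empty (by omega)]
            simp
          rw [hsum]
          have hrq : (r : ℤ) ≤ (q 1 : ℤ) := by exact_mod_cast le_of_lt hrlt
          linarith
        · -- n ≥ 1 : use induction hypothesis on the tail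
          have htail := IH θ' r hr1 (le_of_lt hrlt)
          have hstep : ⌈(r:ℝ)/(q n : ℝ)⌉ ≤ ⌈(q (n+1) : ℝ)/(q n : ℝ)⌉ :=
            hceil_mono r (q (n+1)) (q n) (le_of_lt hrlt)
          have hsum : ∑ j ∈ Finset.Icc 2 (n+1), ⌈(q j : ℝ) / (q (j - 1) : ℝ)⌉
              = (∑ j ∈ Finset.Icc 2 n, ⌈(q j : ℝ) / (q (j - 1) : ℝ)⌉)
                + ⌈(q (n+1) : ℝ) / (q n : ℝ)⌉ := by
            rw [Finset.sum_Icc_succ_top (by omega : 2 ≤ n + 1)]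
            norm_num
          rw [hsum]
          linarith


/-- For `q_n < k ≤ q_{n+1}`,
`M(θ, k) ≤ q_1 + 3⌈k/q_n⌉ + 3 Σ_{j=2}^n ⌈q_j/q_{j-1}⌉`. -/
theorem maxWalk_global_bound (α : ℝ) (hα : Irrational α)
    (hα01 : α ∈ Set.Ioo (0 : ℝ) 1) (q : ℕ → ℕ)
    (hq : ∀ j, (q j : ℝ) = (GenContFract.of α).dens j)
    (n : ℕ) (θ : ℝ) (k : ℕ) (hk1 : q n < k) (hk2 : k ≤ q (n + 1)) :
    maxWalk α θ k ≤ (q 1 : ℤ) + 3 * ⌈(k : ℝ) / (q n : ℝ)⌉ +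
      3 * ∑ j ∈ Finset.Icc 2 n, ⌈(q j : ℝ) / (q (j - 1) : ℝ)⌉ := by
  obtain ⟨hq1, hmono, _⟩ := cf_facts α hα q hq
  have hk0 : 1 ≤ k := le_trans (hq1 n) (le_of_lt hk1)
  apply csSup_le
  · exact ⟨walk α θ 1, 1, le_refl 1, hk0, rfl⟩
  · rintro x ⟨ℓ, hℓ1, hℓk, rfl⟩
    have h := key_induction α hα q hq n θ ℓ hℓ1 (le_trans hℓk hk2)
    have hceilm : ⌈(ℓ:ℝ)/(q n : ℝ)⌉ ≤ ⌈(k:ℝ)/(q n : ℝ)⌉ := by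
      apply Int.ceil_le_ceil
      have hlk : (ℓ:ℝ) ≤ (k:ℝ) := by exact_mod_cast hℓk
      gcongr
    linarith
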